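/- Let ι be a nonempty finite index set, let (X c)_{c ∈ ι} be measurable spaces, and let p be a probability measure on the product space Π c, X c. For each c let p_c = p.map (eval c) be the c-th marginal of p. Then for every family (q c)_{c ∈ ι} of probability measures with q c on X c, D(p ‖ Measure.pi (fun c => p_c)) ≤ D(p ‖ Measure.pi q). That is, the fully factorized measure formed by the marginals of p minimizes the Kullback–Leibler divergence from p over all product measures indexed by ι. (This is the statement of Lemma 2 of the paper when each cluster is a single coordinate: the clustered PMBM-type density that minimizes the KLD factorizes into the cluster marginals.) -/

import Mathlib

open MeasureTheory ProbabilityTheory Real Function Set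
open scoped ENNReal

namespace KLAux

variable {ι : Type*} {X : ι → Type*} [∀ i, MeasurableSpace (X i)]

lemma lmarginal_prod [DecidableEq ι] (q : ∀ i, Measure (X i)) [∀ i, SigmaFinite (q i)]
    (f : ∀ i, X i → ℝ≥0∞) (hf : ∀ i, Measurable (f i)) (s : Finset ι) :
    (∫⋯∫⁻_s, (fun y => ∏ i ∈ s, f i (y i)) ∂q) = fun _ => ∏ i ∈ s, ∫⁻ t, f i t ∂q i := by
  induction s using Finset.induction with
  | empty => simp
  | insert i s hi ih =>
    have hmeas : ∀ (u : Finset ι), Measurable (fun y : ∀ j, X j => ∏ j ∈ u, f j (y j)) :=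
      fun u => Finset.measurable_prod u fun j _ => (hf j).comp (measurable_pi_apply j)
    have h1 : (fun y : ∀ j, X j => ∏ j ∈ insert i s, f j (y j))
        = fun y => f i (y i) * ∏ j ∈ s, f j (y j) := by
      funext y; rw [Finset.prod_insert hi]
    have key : ∀ z : ∀ j, X j, (∫⋯∫⁻_s, (fun y => f i (y i) * ∏ j ∈ s, f j (y j)) ∂q) z
        = f i (z i) * (∫⋯∫⁻_s, (fun y => ∏ j ∈ s, f j (y j)) ∂q) z := by
      intro z
      simp only [lmarginal]
      have hz : ∀ y : ∀ j : s, X j, updateFinset z s y i = z i := by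
        intro y; simp [updateFinset, hi]
      simp_rw [hz]
      exact lintegral_const_mul _ ((hmeas s).comp measurable_updateFinset)
    have hmul : Measurable (fun y : ∀ j, X j => f i (y i) * ∏ j ∈ s, f j (y j)) :=
      Measurable.mul ((hf i).comp (measurable_pi_apply i)) (hmeas s)
    funext x
    rw [h1, lmarginal_insert _ hmul hi]
    simp_rw [key, ih, update_self]
    rw [lintegral_mul_const _ (hf i), Finset.prod_insert hi]

lemma lintegral_pi_prod [Fintype ι] (q : ∀ i, Measure (X i)) [∀ i, SigmaFinite (q i)]
    [Nonempty (∀ i, X i)] (f : ∀ i, X i → ℝ≥0∞) (hf : ∀ i, Measurable (f i)) :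
    ∫⁻ x, ∏ i, f i (x i) ∂Measure.pi q = ∏ i, ∫⁻ t, f i t ∂q i := by
  classical
  rw [lintegral_eq_lmarginal_univ (Classical.arbitrary _), lmarginal_prod q f hf]


lemma nonempty_of_prob {α : Type*} [MeasurableSpace α] (μ : Measure α)
    [IsProbabilityMeasure μ] : Nonempty α := by
  by_contra h
  rw [not_nonempty_iff] at h
  have h1 := measure_univ (μ := μ)
  rw [Set.univ_eq_empty_iff.mpr h, measure_empty] at h1
  exact zero_ne_one h1

lemma pi_eq_withDensity [Fintype ι] (μ q : ∀ i, Measure (X i))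
    [∀ i, IsProbabilityMeasure (μ i)] [∀ i, IsProbabilityMeasure (q i)]
    (hac : ∀ i, μ i ≪ q i) :
    Measure.pi μ = (Measure.pi q).withDensity
      (fun x => ∏ i, (μ i).rnDeriv (q i) (x i)) := by
  classical
  haveI : ∀ i, Nonempty (X i) := fun i => nonempty_of_prob (q i)
  refine Measure.pi_eq fun s hs => ?_
  rw [withDensity_apply _ (MeasurableSet.univ_pi hs),
    ← lintegral_indicator (MeasurableSet.univ_pi hs)]
  have hind : (Set.univ.pi s).indicator (fun x => ∏ i, (μ i).rnDeriv (q i) (x i))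
      = fun x => ∏ i, (s i).indicator ((μ i).rnDeriv (q i)) (x i) := by
    funext x
    by_cases hx : x ∈ Set.univ.pi s
    · rw [Set.indicator_of_mem hx]
      exact Finset.prod_congr rfl fun i _ =>
        (Set.indicator_of_mem (hx i (Set.mem_univ i)) _).symm
    · rw [Set.indicator_of_notMem hx]
      rw [Set.mem_pi] at hx
      push_neg at hx
      obtain ⟨i, -, hxi⟩ := hx
      exact (Finset.prod_eq_zero (Finset.mem_univ i)
        (Set.indicator_of_notMem hxi _)).symm
  rw [hind, lintegral_pi_prod q _ (fun i => ((μ i).measurable_rnDeriv (q i)).indicator (hs i))]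
  refine Finset.prod_congr rfl fun i _ => ?_
  rw [lintegral_indicator (hs i), ← withDensity_apply _ (hs i),
    Measure.withDensity_rnDeriv_eq _ _ (hac i)]

lemma integral_llr_nonneg {α : Type*} [MeasurableSpace α] {μ ν : Measure α}
    [IsProbabilityMeasure μ] [IsProbabilityMeasure ν] (h : μ ≪ ν)
    (hint : Integrable (llr μ ν) μ) : 0 ≤ ∫ x, llr μ ν x ∂μ := by
  have hgi : Integrable (fun x => Real.exp (-(llr μ ν x))) μ :=
    Measure.integrable_toReal_rnDeriv.congr (exp_neg_llr h).symm
  have hjen := convexOn_exp.map_integral_le (continuous_exp.continuousOn) isClosed_univ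
    (Filter.Eventually.of_forall fun x => Set.mem_univ _) hint.neg (by exact hgi)
  have h1 : ∫ x, Real.exp (-(llr μ ν x)) ∂μ ≤ 1 := by
    rw [integral_congr_ae (exp_neg_llr h)]
    calc ∫ x, (ν.rnDeriv μ x).toReal ∂μ ≤ (ν Set.univ).toReal := by
          rw [← setIntegral_univ]
          exact Measure.setIntegral_toReal_rnDeriv_le (measure_ne_top ν _)
      _ = 1 := by simp
  have h2 : Real.exp (∫ x, -llr μ ν x ∂μ) ≤ 1 := by
    refine le_trans (le_trans hjen ?_) h1
    exact le_of_eq (integral_congr_ae (Filter.Eventually.of_forall fun x => rfl))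
  rw [exp_le_one_iff, integral_neg, neg_nonpos] at h2
  exact h2

lemma integrable_max_neg_llr {α : Type*} [MeasurableSpace α] (μ ν : Measure α)
    [IsProbabilityMeasure μ] [IsProbabilityMeasure ν] (h : μ ≪ ν) :
    Integrable (fun x => max (-(llr μ ν x)) 0) μ := by
  refine Integrable.mono' (Measure.integrable_toReal_rnDeriv.congr (exp_neg_llr h).symm)
    (((measurable_llr μ ν).neg.max measurable_const).aestronglyMeasurable)
    (Filter.Eventually.of_forall fun x => ?_)
  rw [Real.norm_eq_abs, abs_of_nonneg (le_max_right _ _)]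
  refine max_le ?_ (Real.exp_pos _).le
  have := Real.add_one_le_exp (-(llr μ ν x))
  linarith


lemma map_eval_pi [Fintype ι] (q : ∀ i, Measure (X i)) [∀ i, IsProbabilityMeasure (q i)]
    (i : ι) : (Measure.pi q).map (Function.eval i) = q i := by
  classical
  ext s hs
  rw [Measure.map_apply (measurable_pi_apply i) hs]
  have hpre : Function.eval i ⁻¹' s
      = Set.pi Set.univ (Function.update (fun c => (Set.univ : Set (X c))) i s) := by
    ext x
    constructor
    · intro hx j _
      by_cases hj : j = i
      · subst hj; simpa using hx
      · simp [Function.update_of_ne hj]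
    · intro hx
      simpa using hx i (Set.mem_univ i)
  rw [hpre, Measure.pi_pi]
  rw [Finset.prod_eq_single_of_mem i (Finset.mem_univ i)]
  · simp
  · intro j _ hj
    simp [Function.update_of_ne hj]

end KLAux


open MeasureTheory ProbabilityTheory

/- Kullback–Leibler divergence between two measures (Mathlib's `klDiv` convention):
`∫ log (dμ/dν) dμ` when `μ ≪ ν` and the log-likelihood ratio is integrable, `+∞` otherwise. -/
open scoped Classical in
noncomputable def klDiv {α : Type*} [MeasurableSpace α] (μ ν : Measure α) : EReal :=
  if μ ≪ ν ∧ Integrable (llr μ ν) μ then ((∫ x, llr μ ν x ∂μ : ℝ) : EReal) else ⊤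

/-- The fully factorized measure formed by the marginals of `p` minimizes the KL divergence
from `p` over all product measures. -/
theorem pi_marginals_minimize_klDiv {ι : Type*} [Fintype ι] [Nonempty ι]
    {X : ι → Type*} [∀ c, MeasurableSpace (X c)]
    (p : Measure (∀ c, X c)) [IsProbabilityMeasure p]
    (q : ∀ c, Measure (X c)) [∀ c, IsProbabilityMeasure (q c)] :
    klDiv p (Measure.pi fun c => p.map (Function.eval c)) ≤ klDiv p (Measure.pi q) := by
  classical
  by_cases hR : p ≪ Measure.pi q ∧ Integrable (llr p (Measure.pi q)) p
  swap
  · have hT : klDiv p (Measure.pi q) = ⊤ := by rw [klDiv, if_neg hR]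
    rw [hT]; exact le_top
  obtain ⟨hac, hint⟩ := hR
  haveI hPMinst : ∀ c, IsProbabilityMeasure (p.map (Function.eval c)) := fun c =>
    Measure.isProbabilityMeasure_map (measurable_pi_apply c).aemeasurable
  set ν : Measure (∀ c, X c) := Measure.pi q with hν
  set pm : ∀ c, Measure (X c) := fun c => p.map (Function.eval c) with hpmdef
  set m : Measure (∀ c, X c) := Measure.pi pm with hm
  haveI : ∀ c, IsProbabilityMeasure (pm c) := hPMinst
  haveI : IsProbabilityMeasure m := by rw [hm]; infer_instance
  haveI : IsProbabilityMeasure ν := by rw [hν]; infer_instance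
  -- marginal absolute continuity
  have hc : ∀ c, pm c ≪ q c := fun c => by
    have h := hac.map (measurable_pi_apply c : Measurable (Function.eval c))
    rwa [KLAux.map_eval_pi q c] at h
  set g : ∀ c, X c → ℝ≥0∞ := fun c => (pm c).rnDeriv (q c) with hg
  have hgmeas : ∀ c, Measurable (g c) := fun c => Measure.measurable_rnDeriv _ _
  set G : (∀ c, X c) → ℝ≥0∞ := fun x => ∏ c, g c (x c) with hG
  have hGmeas : Measurable G :=
    Finset.measurable_prod _ fun c _ => (hgmeas c).comp (measurable_pi_apply c)
  have hpi : m = ν.withDensity G := KLAux.pi_eq_withDensity pm q hc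
  have hmν : m ≪ ν := hpi ▸ withDensity_absolutelyContinuous ν G
  -- coordinate densities are a.e.[p] positive and finite
  have hcoord : ∀ᵐ x ∂p, ∀ c, g c (x c) ≠ 0 ∧ g c (x c) ≠ ∞ := by
    rw [ae_all_iff]
    intro c
    have hSm : MeasurableSet (g c ⁻¹' {0} ∪ g c ⁻¹' {∞}) :=
      ((hgmeas c) (measurableSet_singleton 0)).union ((hgmeas c) (measurableSet_singleton ∞))
    have hzero : pm c (g c ⁻¹' {0}) = 0 := by
      rw [← Measure.withDensity_rnDeriv_eq (pm c) (q c) (hc c),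
        withDensity_apply _ ((hgmeas c) (measurableSet_singleton 0))]
      have hcong : ∫⁻ t in g c ⁻¹' {0}, (pm c).rnDeriv (q c) t ∂(q c)
          = ∫⁻ t in g c ⁻¹' {0}, 0 ∂(q c) :=
        setLIntegral_congr_fun ((hgmeas c) (measurableSet_singleton 0))
          (fun t ht => ht)
      rw [hcong]
      simp
    have htop : pm c (g c ⁻¹' {∞}) = 0 := by
      refine (hc c) ?_
      have h1 := Measure.rnDeriv_lt_top (pm c) (q c)
      rw [ae_iff] at h1
      have : {t : X c | ¬(pm c).rnDeriv (q c) t < ∞} = g c ⁻¹' {∞} := by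
        ext t; simp [lt_top_iff_ne_top, hg]
      rwa [this] at h1
    have hp0 : p (Function.eval c ⁻¹' (g c ⁻¹' {0} ∪ g c ⁻¹' {∞})) = 0 := by
      rw [← Measure.map_apply (measurable_pi_apply c) hSm]
      refine le_antisymm ?_ zero_le
      calc pm c (g c ⁻¹' {0} ∪ g c ⁻¹' {∞})
          ≤ pm c (g c ⁻¹' {0}) + pm c (g c ⁻¹' {∞}) := measure_union_le _ _
        _ = 0 := by rw [hzero, htop, add_zero]
    rw [ae_iff]
    refine measure_mono_null ?_ hp0
    intro x hx
    simp only [Set.mem_setOf_eq, not_and_or, not_not] at hx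
    simpa using hx
  have hGne : ∀ᵐ x ∂p, G x ≠ 0 ∧ G x ≠ ∞ := by
    filter_upwards [hcoord] with x hx
    constructor
    · exact Finset.prod_ne_zero_iff.2 fun c _ => (hx c).1
    · exact (ENNReal.prod_lt_top fun c _ => (hx c).2.lt_top).ne
  -- p ≪ m
  have hpm : p ≪ m := by
    rw [hpi]
    refine Measure.AbsolutelyContinuous.mk fun s hs hs0 => ?_
    rw [withDensity_apply _ hs] at hs0
    have hae : ∀ᵐ x ∂ν, x ∈ s → G x = 0 := by
      rw [lintegral_eq_zero_iff hGmeas] at hs0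
      rw [← ae_restrict_iff' hs]
      exact hs0
    rw [measure_eq_zero_iff_ae_notMem]
    filter_upwards [hac.ae_le hae, hGne] with x h1 h2 hxs
    exact h2.1 (h1 hxs)
  -- rnDeriv chain rule
  have hmG : m.rnDeriv ν =ᵐ[ν] G := by
    rw [hpi]; exact Measure.rnDeriv_withDensity ν hGmeas
  have hchain : p.rnDeriv m * m.rnDeriv ν =ᵐ[ν] p.rnDeriv ν :=
    Measure.rnDeriv_mul_rnDeriv hpm
  have hE1 : llr p ν =ᵐ[p] fun x => llr p m x + ∑ c, llr (pm c) (q c) (x c) := by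
    filter_upwards [hac.ae_le hchain, hac.ae_le hmG, Measure.rnDeriv_pos hpm,
      hpm.ae_le (Measure.rnDeriv_lt_top p m), hcoord, hGne] with x h1 h2 h3 h4 h5 h6
    have hx : p.rnDeriv ν x = p.rnDeriv m x * G x := by
      rw [← h1, Pi.mul_apply, h2]
    have hB0 : (p.rnDeriv m x).toReal ≠ 0 :=
      ENNReal.toReal_ne_zero.2 ⟨h3.ne', h4.ne⟩
    have hG0 : (G x).toReal ≠ 0 := ENNReal.toReal_ne_zero.2 ⟨h6.1, h6.2⟩
    have hlog : llr p ν x = llr p m x + Real.log (G x).toReal := by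
      rw [llr, hx, ENNReal.toReal_mul, Real.log_mul hB0 hG0]
      rfl
    rw [hlog]
    congr 1
    rw [hG, ENNReal.toReal_prod, Real.log_prod
      (fun c _ => ENNReal.toReal_ne_zero.2 ⟨(h5 c).1, (h5 c).2⟩)]
    rfl
  -- integrability pieces
  have hnegint : ∀ c, Integrable (fun x : ∀ c, X c =>
      max (-(llr (pm c) (q c) (x c))) 0) p := by
    intro c
    have h1 : Integrable (fun t => max (-(llr (pm c) (q c) t)) 0) (pm c) :=
      KLAux.integrable_max_neg_llr _ _ (hc c)
    have h2 := (integrable_map_measure h1.aestronglyMeasurable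
      (measurable_pi_apply c).aemeasurable (μ := p)).1
    exact h2 h1
  have hexpB : Integrable (fun x => Real.exp (-(llr p m x))) p :=
    Measure.integrable_toReal_rnDeriv.congr (exp_neg_llr hpm).symm
  have hsumneg : Integrable (fun x : ∀ c, X c =>
      ∑ c, max (-(llr (pm c) (q c) (x c))) 0) p :=
    integrable_finset_sum _ fun c _ => hnegint c
  have hBint : Integrable (llr p m) p := by
    refine Integrable.mono' ((hint.abs.add hsumneg).add hexpB)
      (stronglyMeasurable_llr _ _).aestronglyMeasurable ?_
    filter_upwards [hE1] with x hx
    simp only [Pi.add_apply]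
    have hsum1 : -∑ c, llr (pm c) (q c) (x c)
        ≤ ∑ c, max (-(llr (pm c) (q c) (x c))) 0 := by
      rw [← Finset.sum_neg_distrib]
      exact Finset.sum_le_sum fun c _ => le_max_left _ _
    have hsum2 : (0:ℝ) ≤ ∑ c, max (-(llr (pm c) (q c) (x c))) 0 :=
      Finset.sum_nonneg fun c _ => le_max_right _ _
    have hexp : -(llr p m x) ≤ Real.exp (-(llr p m x)) := by
      have := Real.add_one_le_exp (-(llr p m x)); linarith
    have habs : |llr p ν x| ≥ llr p ν x := le_abs_self _
    rw [Real.norm_eq_abs, abs_eq_max_neg]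
    refine max_le ?_ ?_
    · have : llr p m x = llr p ν x - ∑ c, llr (pm c) (q c) (x c) := by rw [hx]; ring
      have hexp0 := Real.exp_pos (-(llr p m x))
      linarith
    · have h0 : (0:ℝ) ≤ |llr p ν x| := abs_nonneg _
      linarith
  have hHint : Integrable (fun x : ∀ c, X c => ∑ c, llr (pm c) (q c) (x c)) p := by
    refine (hint.sub hBint).congr ?_
    filter_upwards [hE1] with x hx
    simp only [Pi.sub_apply]
    rw [hx]; ring
  have hcoordint : ∀ c, Integrable (fun x : ∀ c, X c => llr (pm c) (q c) (x c)) p := by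
    intro c
    refine Integrable.mono' (hHint.abs.add hsumneg)
      (((measurable_llr _ _).comp (measurable_pi_apply c)).aestronglyMeasurable)
      (Filter.Eventually.of_forall fun x => ?_)
    simp only [Pi.add_apply]
    have hsplit : llr (pm c) (q c) (x c)
        = (∑ c', llr (pm c') (q c') (x c'))
          - ∑ c' ∈ Finset.univ.erase c, llr (pm c') (q c') (x c') := by
      rw [← Finset.add_sum_erase _ _ (Finset.mem_univ c)]; ring
    have h1 : -∑ c' ∈ Finset.univ.erase c, llr (pm c') (q c') (x c')
        ≤ ∑ c', max (-(llr (pm c') (q c') (x c'))) 0 := by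
      rw [← Finset.sum_neg_distrib]
      calc ∑ c' ∈ Finset.univ.erase c, -llr (pm c') (q c') (x c')
          ≤ ∑ c' ∈ Finset.univ.erase c, max (-(llr (pm c') (q c') (x c'))) 0 :=
            Finset.sum_le_sum fun c' _ => le_max_left _ _
        _ ≤ ∑ c', max (-(llr (pm c') (q c') (x c'))) 0 :=
            Finset.sum_le_sum_of_subset_of_nonneg (Finset.erase_subset _ _)
              fun c' _ _ => le_max_right _ _
    have h2 : -(llr (pm c) (q c) (x c)) ≤ ∑ c', max (-(llr (pm c') (q c') (x c'))) 0 :=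
      le_trans (le_max_left _ _) (Finset.single_le_sum
        (fun c' _ => le_max_right (-(llr (pm c') (q c') (x c'))) 0) (Finset.mem_univ c))
    have habs : |∑ c', llr (pm c') (q c') (x c')| ≥ ∑ c', llr (pm c') (q c') (x c') :=
      le_abs_self _
    have h0 : (0:ℝ) ≤ |∑ c', llr (pm c') (q c') (x c')| := abs_nonneg _
    rw [Real.norm_eq_abs, abs_eq_max_neg]
    exact max_le (by linarith) (by linarith)
  have hcint : ∀ c, Integrable (llr (pm c) (q c)) (pm c) := fun c =>
    (integrable_map_measure (stronglyMeasurable_llr _ _).aestronglyMeasurable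
      (measurable_pi_apply c).aemeasurable).2 (hcoordint c)
  -- conclusion
  have hsum0 : 0 ≤ ∫ x, ∑ c, llr (pm c) (q c) (x c) ∂p := by
    rw [integral_finset_sum _ fun c _ => hcoordint c]
    refine Finset.sum_nonneg fun c _ => ?_
    have hmapint : ∫ x, llr (pm c) (q c) (x c) ∂p = ∫ t, llr (pm c) (q c) t ∂(pm c) :=
      (integral_map (measurable_pi_apply c).aemeasurable
        (stronglyMeasurable_llr _ _).aestronglyMeasurable).symm
    rw [hmapint]
    exact KLAux.integral_llr_nonneg (hc c) (hcint c)
  have hle : ∫ x, llr p m x ∂p ≤ ∫ x, llr p ν x ∂p := by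
    rw [integral_congr_ae hE1, integral_add hBint hHint]
    linarith
  rw [klDiv, klDiv, if_pos ⟨hpm, hBint⟩, if_pos ⟨hac, hint⟩]
  exact EReal.coe_le_coe_iff.2 hle
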